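/- In the coded system X of the previous construction, X has property (D): for every σ ∈ Σ and every word a with aσ ∈ L(X), there exists a word w with wa ∈ L(X) such that σ ∈ ω₁⁺(wa), i.e. for every c with cwa ∈ L(X), also cwaσ ∈ L(X). Concretely, if σ ≠ γ one may take w = 1^K (K = |a|), and if σ = γ one may take w = α. -/

import Mathlib

/-- The five-letter alphabet {0, 1, α, β, γ}. -/
inductive C5 : Type
  | zero | one | alpha | beta | gamma
  deriving DecidableEq

instance : Fintype C5 :=
  ⟨{C5.zero, C5.one, C5.alpha, C5.beta, C5.gamma}, fun x => by cases x <;> simp⟩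

instance : TopologicalSpace C5 := ⊥
instance : DiscreteTopology C5 := ⟨rfl⟩

/-- `w` occurs in the bi-infinite sequence `x`. -/
def occursIn (w : List C5) (x : ℤ → C5) : Prop :=
  ∃ i : ℤ, ∀ j : Fin w.length, x (i + (j : ℤ)) = w.get j

/-- Forbidden words of the SFT `Yₙ`. -/
def Forb (n : ℕ) : Set (List C5) :=
  {w | (∃ m : ℕ, n < m ∧ w = List.replicate m C5.zero) ∨
       (∃ k : ℕ, 1 ≤ k ∧ k ≤ n ∧ ∃ c : List C5, c.length = k ∧
          w = [C5.beta, C5.alpha] ++ c ++ [C5.gamma] ++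
            List.replicate k C5.zero ++ [C5.gamma]) ∨
       w = [C5.beta, C5.beta] ∨ w = [C5.beta, C5.gamma] ∨
       w = [C5.beta, C5.zero] ∨ w = [C5.beta, C5.one]}

/-- The SFT `Yₙ`. -/
def Y (n : ℕ) : Set (ℤ → C5) := {x | ∀ w ∈ Forb n, ¬ occursIn w x}

/-- The coded system `X`: the closure of the increasing union of the `Yₙ`. -/
def Xcoded : Set (ℤ → C5) := closure (⋃ n : ℕ, Y n)

/-- The language of a set of bi-infinite sequences. -/
def LangOf (S : Set (ℤ → C5)) (w : List C5) : Prop := ∃ x ∈ S, occursIn w x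

/-- The coded system X has property (D): for every σ ∈ Σ and every word a with
aσ ∈ L(X) there is a word w with wa ∈ L(X) such that σ ∈ ω₁⁺(wa). -/
-- ## infrastructure

def NoForb (n : ℕ) (u : List C5) : Prop := ∀ v ∈ Forb n, ¬ v <:+: u

lemma infix_of_win {u v : List C5} {s : ℕ}
    (hle : s + v.length ≤ u.length)
    (h : ∀ j < v.length, u.getD (s + j) C5.one = v.getD j C5.one) : v <:+: u := by
  have hv : v = (u.drop s).take v.length := by
    apply List.ext_getElem
    · simp; omega
    · intro j hj hj'
      have h1 : s + j < u.length := by omega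
      have := h j hj
      rw [List.getD_eq_getElem _ _ h1, List.getD_eq_getElem _ _ hj] at this
      simp only [List.getElem_take, List.getElem_drop]
      exact this.symm
  rw [hv]
  exact ((List.take_prefix _ _).isInfix).trans (List.drop_suffix _ _).isInfix

example : True := trivial

lemma win_of_infix {u v : List C5} (h : v <:+: u) :
    ∃ s, s + v.length ≤ u.length ∧
      ∀ j < v.length, u.getD (s + j) C5.one = v.getD j C5.one := by
  obtain ⟨p, t, rfl⟩ := h
  refine ⟨p.length, by simp, fun j hj => ?_⟩
  rw [List.append_assoc, List.getD_append_right _ _ _ _ (by omega)]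
  have he : p.length + j - p.length = j := by omega
  rw [he, List.getD_append _ _ _ _ (by omega)]

lemma getD_ones (Kb p : ℕ) : (List.replicate Kb C5.one).getD p C5.one = C5.one := by
  rcases Nat.lt_or_ge p Kb with h | h
  · rw [List.getD_eq_getElem _ _ (by simpa using h)]; simp
  · exact List.getD_eq_default _ _ (by simpa using h)

lemma getD_zeros {m j : ℕ} (h : j < m) :
    (List.replicate m C5.zero).getD j C5.one = C5.zero := by
  rw [List.getD_eq_getElem _ _ (by simpa using h)]; simp

-- pattern helpers
lemma pat_eq (k : ℕ) (c' : List C5) :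
    [C5.beta, C5.alpha] ++ c' ++ [C5.gamma] ++ List.replicate k C5.zero ++ [C5.gamma]
      = C5.beta :: C5.alpha :: (c' ++ C5.gamma :: (List.replicate k C5.zero ++ [C5.gamma])) := by
  simp

lemma pat_length {k : ℕ} {c' : List C5} (hc : c'.length = k) :
    ([C5.beta, C5.alpha] ++ c' ++ [C5.gamma] ++ List.replicate k C5.zero ++ [C5.gamma]).length
      = 2 * k + 4 := by
  simp [hc]; omega

lemma pat_getD {k : ℕ} {c' : List C5} (hc : c'.length = k) :
    (([C5.beta, C5.alpha] ++ c' ++ [C5.gamma] ++ List.replicate k C5.zero ++ [C5.gamma]).getD 0 C5.one = C5.beta)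
    ∧ (([C5.beta, C5.alpha] ++ c' ++ [C5.gamma] ++ List.replicate k C5.zero ++ [C5.gamma]).getD 1 C5.one = C5.alpha)
    ∧ (([C5.beta, C5.alpha] ++ c' ++ [C5.gamma] ++ List.replicate k C5.zero ++ [C5.gamma]).getD (k+2) C5.one = C5.gamma)
    ∧ (∀ j < k, ([C5.beta, C5.alpha] ++ c' ++ [C5.gamma] ++ List.replicate k C5.zero ++ [C5.gamma]).getD (k+3+j) C5.one = C5.zero)
    ∧ (([C5.beta, C5.alpha] ++ c' ++ [C5.gamma] ++ List.replicate k C5.zero ++ [C5.gamma]).getD (2*k+3) C5.one = C5.gamma) := by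
  rw [pat_eq]
  refine ⟨rfl, rfl, ?_, ?_, ?_⟩
  · show (c' ++ _).getD k C5.one = _
    rw [List.getD_append_right _ _ _ _ (by omega), hc]
    simp
  · intro j hj
    rw [show k+3+j = (k+1+j)+1+1 by omega, List.getD_cons_succ, List.getD_cons_succ]
    rw [List.getD_append_right _ _ _ _ (by omega), hc]
    have : k + 1 + j - k = j + 1 := by omega
    rw [this]
    show (List.replicate k C5.zero ++ [C5.gamma]).getD j C5.one = _
    rw [List.getD_append _ _ _ _ (by simpa using hj)]
    exact getD_zeros hj
  · rw [show 2*k+3 = (2*k+1)+1+1 by omega, List.getD_cons_succ, List.getD_cons_succ]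
    rw [List.getD_append_right _ _ _ _ (by omega), hc]
    have : 2*k + 1 - k = k + 1 := by omega
    rw [this]
    show (List.replicate k C5.zero ++ [C5.gamma]).getD k C5.one = _
    rw [List.getD_append_right _ _ _ _ (by simp), List.length_replicate]
    simp

lemma pat_one {k t : ℕ} {c' : List C5} (hc : c'.length = k) (ht : t < 2*k+4)
    (h : ([C5.beta, C5.alpha] ++ c' ++ [C5.gamma] ++ List.replicate k C5.zero ++ [C5.gamma]).getD t C5.one = C5.one) :
    2 ≤ t ∧ t ≤ k + 1 := by
  obtain ⟨h0, h1, h2, h3, h4⟩ := pat_getD hc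
  by_contra hcon
  rcases Nat.lt_or_ge t 2 with h' | h'
  · interval_cases t
    · rw [h0] at h; exact C5.noConfusion h
    · rw [h1] at h; exact C5.noConfusion h
  · have ht' : k + 2 ≤ t := by omega
    rcases Nat.lt_or_ge t (k+3) with h'' | h''
    · have : t = k + 2 := by omega
      subst this; rw [h2] at h; exact C5.noConfusion h
    · rcases Nat.lt_or_ge t (2*k+3) with h3' | h3'
      · have := h3 (t - (k+3)) (by omega)
        have he : k + 3 + (t - (k+3)) = t := by omega
        rw [he] at this; rw [this] at h; exact C5.noConfusion h
      · have : t = 2*k+3 := by omega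
        subst this; rw [h4] at h; exact C5.noConfusion h

lemma occursIn_of_infix {v u : List C5} {x : ℤ → C5} (h : v <:+: u) (hu : occursIn u x) :
    occursIn v x := by
  obtain ⟨p, t, rfl⟩ := h
  obtain ⟨i, hi⟩ := hu
  refine ⟨i + p.length, fun j => ?_⟩
  have hj : (p.length + (j : ℕ)) < (p ++ v ++ t).length := by simp; omega
  have := hi ⟨p.length + (j : ℕ), hj⟩
  have he : i + (p.length : ℤ) + ((j : ℕ) : ℤ) = i + ((p.length + (j : ℕ) : ℕ) : ℤ) := by
    push_cast; ring
  rw [he]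
  rw [this]
  simp only [List.get_eq_getElem]
  rw [← List.getD_eq_getElem _ C5.one, ← List.getD_eq_getElem _ C5.one,
    List.append_assoc, List.getD_append_right _ _ _ _ (by omega)]
  have he2 : p.length + (j : ℕ) - p.length = (j : ℕ) := by omega
  rw [he2, List.getD_append _ _ _ _ (by omega)]

lemma lang_noforb {u : List C5} (h : LangOf Xcoded u) : ∃ n, NoForb n u := by
  obtain ⟨x, hx, i, hi⟩ := h
  set O : Set (ℤ → C5) := {y | ∀ j : Fin u.length, y (i + (j : ℤ)) = u.get j} with hO
  have hopen : IsOpen O := by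
    have : O = ⋂ j : Fin u.length, (fun y : ℤ → C5 => y (i + (j : ℤ))) ⁻¹' {u.get j} := by
      ext y; simp [hO, Set.mem_iInter]
    rw [this]
    exact isOpen_iInter_of_finite fun j =>
      (continuous_apply _).isOpen_preimage _ (isOpen_discrete _)
  obtain ⟨y, hyO, hyU⟩ := mem_closure_iff.mp hx O hopen hi
  obtain ⟨n, hyn⟩ := Set.mem_iUnion.mp hyU
  refine ⟨n, fun v hv hinf => ?_⟩
  exact hyn v hv (occursIn_of_infix hinf ⟨i, hyO⟩)

def padP (u' : List C5) : ℤ → C5 := fun t => if t < 0 then C5.one else u'.getD t.toNat C5.one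

lemma pad_nat (u' : List C5) (n : ℕ) : padP u' (n : ℤ) = u'.getD n C5.one := by
  simp [padP]

lemma pad_start {u' v : List C5} {i : ℤ}
    (hocc : ∀ j : Fin v.length, padP u' (i + (j : ℤ)) = v.get j)
    (hne : 0 < v.length) (hhead : v.getD 0 C5.one ≠ C5.one) :
    ∃ s : ℕ, s < u'.length ∧ ∀ j < v.length, u'.getD (s + j) C5.one = v.getD j C5.one := by
  have h0 := hocc ⟨0, hne⟩
  have hi0 : 0 ≤ i := by
    by_contra hneg
    push_neg at hneg
    have : padP u' (i + ((0 : ℕ) : ℤ)) = C5.one := by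
      simp [padP]; intro hge; omega
    rw [h0] at this
    simp only [List.get_eq_getElem, ← List.getD_eq_getElem _ C5.one] at this
    exact hhead this
  set s := i.toNat with hs
  have his : i = (s : ℤ) := by omega
  have hwin : ∀ j < v.length, u'.getD (s + j) C5.one = v.getD j C5.one := by
    intro j hj
    have := hocc ⟨j, hj⟩
    rw [his] at this
    have he : ((s : ℤ) + ((j : ℕ) : ℤ)) = (((s + j : ℕ) : ℕ) : ℤ) := by push_cast; ring
    rw [he, pad_nat] at this
    rw [this]
    exact (List.getD_eq_getElem _ _ hj).symm
  refine ⟨s, ?_, hwin⟩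
  by_contra hge
  push_neg at hge
  have := hwin 0 hne
  rw [List.getD_eq_default _ _ (by omega)] at this
  exact hhead this.symm

lemma pad_infix {u' v : List C5} {i : ℤ}
    (hocc : ∀ j : Fin v.length, padP u' (i + (j : ℤ)) = v.get j)
    (hne : 0 < v.length) (hhead : v.getD 0 C5.one ≠ C5.one)
    (hlast : v.getD (v.length - 1) C5.one ≠ C5.one) :
    v <:+: u' := by
  obtain ⟨s, hsl, hwin⟩ := pad_start hocc hne hhead
  have hbound : s + v.length ≤ u'.length := by
    by_contra hgt
    push_neg at hgt
    have := hwin (v.length - 1) (by omega)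
    rw [List.getD_eq_default _ _ (by omega)] at this
    exact hlast this.symm
  exact infix_of_win hbound hwin

lemma lang_of_noforb (u : List C5) (n : ℕ) (h : NoForb n (u ++ [C5.alpha])) :
    LangOf Xcoded u := by
  refine ⟨padP (u ++ [C5.alpha]), ?_, 0, fun j => ?_⟩
  · apply subset_closure
    refine Set.mem_iUnion.mpr ⟨n, ?_⟩
    intro v hv hvocc
    obtain ⟨i, hocc⟩ := hvocc
    rcases hv with ⟨m', hm', rfl⟩ | ⟨k, hk1, hkn, c', hc', rfl⟩ | rfl | rfl | rfl | rfl
    · refine h _ (Or.inl ⟨m', hm', rfl⟩) (pad_infix hocc ?_ ?_ ?_)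
      · simpa using by omega
      · rw [getD_zeros (by omega)]; exact fun hc => C5.noConfusion hc
      · rw [List.length_replicate, getD_zeros (by omega)]; exact fun hc => C5.noConfusion hc
    · obtain ⟨p0, p1, p2, p3, p4⟩ := pat_getD hc'
      refine h _ (Or.inr (Or.inl ⟨k, hk1, hkn, c', hc', rfl⟩)) (pad_infix hocc ?_ ?_ ?_)
      · rw [pat_length hc']; omega
      · rw [p0]; exact fun hc => C5.noConfusion hc
      · rw [pat_length hc', show 2*k+4-1 = 2*k+3 by omega, p4]
        exact fun hc => C5.noConfusion hc
    · exact h _ (Or.inr (Or.inr (Or.inl rfl)))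
        (pad_infix hocc (by simp) (by simp [List.getD]) (by simp [List.getD]))
    · exact h _ (Or.inr (Or.inr (Or.inr (Or.inl rfl))))
        (pad_infix hocc (by simp) (by simp [List.getD]) (by simp [List.getD]))
    · exact h _ (Or.inr (Or.inr (Or.inr (Or.inr (Or.inl rfl)))))
        (pad_infix hocc (by simp) (by simp [List.getD]) (by simp [List.getD]))
    · -- v = [β, 1]
      obtain ⟨s, hsl, hwin⟩ := pad_start hocc (by simp) (by simp [List.getD])
      rcases Nat.lt_or_ge (s + 1) (u ++ [C5.alpha]).length with hlt | hge
      · exact h _ (Or.inr (Or.inr (Or.inr (Or.inr (Or.inr rfl)))))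
          (infix_of_win (by simp only [List.length_cons, List.length_nil,
            List.length_append] at hlt ⊢; omega) hwin)
      · have hs : s = u.length := by simp at hsl hge ⊢; omega
        have := hwin 0 (by simp)
        rw [Nat.add_zero, hs, List.getD_append_right _ _ _ _ (le_refl _)] at this
        simp [List.getD] at this
  · have hj : (j : ℕ) < (u ++ [C5.alpha]).length := by simp
    have he : ((0 : ℤ) + ((j : ℕ) : ℤ)) = (((j : ℕ) : ℕ) : ℤ) := by push_cast; ring
    rw [he, pad_nat, List.getD_append _ _ _ _ j.isLt]
    simp [List.getD_eq_getElem _ _ j.isLt]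

lemma noforb_parts (a c : List C5) (σ : C5) (N m n : ℕ)
    (hmN : m ≤ N) (hnN : n ≤ N)
    (hn : NoForb n ((a ++ [σ]) ++ [C5.alpha]))
    (hm : NoForb m (c ++ List.replicate (a.length + 2) C5.one ++ a)) :
    NoForb N (c ++ (List.replicate (a.length + 2) C5.one ++ ((a ++ [σ]) ++ [C5.alpha]))) := by
  set K := a.length with hK
  set w := List.replicate (K + 2) C5.one with hw
  set R := (a ++ [σ]) ++ [C5.alpha] with hR
  set U := c ++ (w ++ R) with hU
  set W2 := c ++ w ++ a with hW2
  set M := c.length with hM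
  have hwlen : w.length = K + 2 := by simp [hw]
  have hRlen : R.length = K + 2 := by simp [hR, hK]
  have hUlen : U.length = M + (K + 2) + (K + 2) := by simp [hU, hw, hR]; try omega
  have hW2len : W2.length = M + (K + 2) + K := by simp [hW2, hw]; try omega
  have hU1 : ∀ p, p < M → U.getD p C5.one = c.getD p C5.one := by
    intro p hp; exact List.getD_append _ _ _ _ (by omega)
  have hU2 : ∀ p, M ≤ p → p < M + (K + 2) → U.getD p C5.one = C5.one := by
    intro p hp1 hp2
    rw [hU, List.getD_append_right _ _ _ _ (by omega),
      List.getD_append _ _ _ _ (by rw [hwlen]; omega)]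
    exact getD_ones _ _
  have hU3 : ∀ p, U.getD (M + (K + 2) + p) C5.one = R.getD p C5.one := by
    intro p
    rw [hU, List.getD_append_right _ _ _ _ (by omega),
      show M + (K+2) + p - c.length = (K+2) + p by omega,
      List.getD_append_right _ _ _ _ (by rw [hwlen]; omega),
      show K + 2 + p - w.length = p by rw [hwlen]; omega]
  have hV1 : ∀ p, p < M → W2.getD p C5.one = c.getD p C5.one := by
    intro p hp
    rw [hW2, List.getD_append _ _ _ _ (by simp [hwlen]; omega),
      List.getD_append _ _ _ _ (by omega)]
  have hV2 : W2.getD M C5.one = C5.one := by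
    rw [hW2, List.getD_append _ _ _ _ (by simp [hwlen]; try omega),
      List.getD_append_right _ _ _ _ (by omega), show M - c.length = 0 by omega]
    exact getD_ones _ _
  have hcW2 : c <:+: W2 := by
    rw [hW2, List.append_assoc]
    exact (List.prefix_append c _).isInfix
  intro v hv hinf
  obtain ⟨s, hsle, hwin⟩ := win_of_infix hinf
  rw [hUlen] at hsle
  have winR : M + (K + 2) ≤ s → v <:+: R := by
    intro hA
    refine infix_of_win (u := R) (s := s - (M + (K+2))) (by omega) (fun j hj => ?_)
    have := hwin j hj
    rwa [show s + j = M + (K+2) + (s - (M + (K+2)) + j) by omega, hU3] at this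
  have winC : s + v.length ≤ M → v <:+: c := by
    intro hB
    refine infix_of_win (u := c) (s := s) (by omega) (fun j hj => ?_)
    have := hwin j hj
    rwa [hU1 (s + j) (by omega)] at this
  rcases hv with ⟨m', hm', rfl⟩ | ⟨k, hk1, hkN, c', hc', rfl⟩ | hp
  · -- zero run
    have hlen : (List.replicate m' C5.zero).length = m' := by simp
    rw [hlen] at hsle hwin winC
    rcases Nat.lt_or_ge s (M + (K + 2)) with hA | hA
    · rcases Nat.lt_or_ge M (s + m') with hB | hB
      · rcases Nat.lt_or_ge s M with hC | hC
        · have h1 := hwin (M - s) (by omega)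
          rw [show s + (M - s) = M by omega, hU2 M (le_refl _) (by omega),
            getD_zeros (by omega)] at h1
          exact C5.noConfusion h1
        · have h1 := hwin 0 (by omega)
          rw [Nat.add_zero, hU2 s hC (by omega), getD_zeros (by omega)] at h1
          exact C5.noConfusion h1
      · exact hm _ (Or.inl ⟨m', by omega, rfl⟩) ((winC (by omega)).trans hcW2)
    · exact hn _ (Or.inl ⟨m', by omega, rfl⟩) (winR hA)
  · -- pattern
    obtain ⟨p0, p1, p2, p3, p4⟩ := pat_getD hc'
    have hlen := pat_length hc'
    rw [hlen] at hsle hwin winC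
    rcases Nat.lt_or_ge s (M + (K + 2)) with hA | hA
    · rcases Nat.lt_or_ge (M + (K + 2)) (s + (2*k+4)) with hC | hB
      · -- case (C): straddles end of block
        have ht0lt : M + (K+2) - 1 - s < 2*k+4 := by omega
        have h_t0 := hwin (M + (K+2) - 1 - s) ht0lt
        rw [show s + (M + (K+2) - 1 - s) = M + (K+2) - 1 by omega,
          hU2 _ (by omega) (by omega)] at h_t0
        obtain ⟨ht2, htk⟩ := pat_one hc' ht0lt h_t0.symm
        have hs0 := hwin 0 (by omega)
        rw [Nat.add_zero, p0] at hs0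
        have hsM : s < M := by
          by_contra hge
          rw [hU2 s (by omega) (by omega)] at hs0
          exact C5.noConfusion hs0
        have hs1 := hwin 1 (by omega)
        rw [p1] at hs1
        have hs1M : s + 1 < M := by
          by_contra hge
          rw [hU2 (s+1) (by omega) (by omega)] at hs1
          exact C5.noConfusion hs1
        omega
      · -- case (B): inside c
        have hlast := hwin (2*k+3) (by omega)
        rw [p4] at hlast
        have hin : s + (2*k+4) ≤ M := by
          by_contra hgt
          rw [hU2 (s + (2*k+3)) (by omega) (by omega)] at hlast
          exact C5.noConfusion hlast
        have hvc := winC (by omega)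
        rcases le_or_gt k m with hkm | hkm
        · exact hm _ (Or.inr (Or.inl ⟨k, hk1, hkm, c', hc', rfl⟩)) (hvc.trans hcW2)
        · refine hm _ (Or.inl ⟨k, hkm, rfl⟩) (List.IsInfix.trans ?_ hcW2)
          refine infix_of_win (u := c) (s := s + (k+3)) (by simp; omega) (fun j hj => ?_)
          have hjk : j < k := by simpa using hj
          have := hwin (k+3+j) (by omega)
          rw [p3 j hjk, ← Nat.add_assoc] at this
          rw [← hU1 (s + (k+3) + j) (by omega), this, getD_zeros hjk]
    · -- case (A): inside R
      rcases le_or_gt k n with hkn | hkn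
      · exact hn _ (Or.inr (Or.inl ⟨k, hk1, hkn, c', hc', rfl⟩)) (winR hA)
      · refine hn _ (Or.inl ⟨k, hkn, rfl⟩)
          (infix_of_win (u := R) (s := s - (M + (K+2)) + (k+3))
            (by simp [hRlen]; omega) (fun j hj => ?_))
        have hjk : j < k := by simpa using hj
        have := hwin (k+3+j) (by omega)
        rw [p3 j hjk,
          show s + (k+3+j) = M + (K+2) + (s - (M + (K+2)) + (k+3) + j) by omega,
          hU3] at this
        rw [this, getD_zeros hjk]
  · -- pairs
    have hvm : v ∈ Forb m := Or.inr (Or.inr hp)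
    have hvn : v ∈ Forb n := Or.inr (Or.inr hp)
    obtain ⟨x, rfl⟩ : ∃ x, v = [C5.beta, x] := by
      rcases hp with rfl | rfl | rfl | rfl <;> exact ⟨_, rfl⟩
    have hlen : [C5.beta, x].length = 2 := rfl
    rw [hlen] at hsle hwin winC
    have h0 := hwin 0 (by omega)
    rw [Nat.add_zero, show [C5.beta, x].getD 0 C5.one = C5.beta from rfl] at h0
    rcases Nat.lt_or_ge s (M + (K + 2)) with hA | hA
    · have hsM : s < M := by
        by_contra hge
        rw [hU2 s (by omega) (by omega)] at h0
        exact C5.noConfusion h0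
      rcases Nat.lt_or_ge (s + 1) M with hB | hB
      · exact hm _ hvm ((winC (by omega)).trans hcW2)
      · have hsM1 : s + 1 = M := by omega
        refine hm _ hvm (infix_of_win (u := W2) (s := s)
          (by rw [hW2len]; omega) (fun j hj => ?_))
        have hj' : j < 2 := by simpa using hj
        interval_cases j
        · rw [Nat.add_zero, hV1 s hsM, ← hU1 s hsM, h0]; rfl
        · rw [hsM1, hV2]
          have h1 := hwin 1 (by omega)
          rw [hsM1, hU2 M (le_refl _) (by omega)] at h1
          exact h1
    · exact hn _ hvn (winR hA)

lemma forb_head {n : ℕ} {v : List C5} (hv : v ∈ Forb n) :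
    0 < v.length ∧ v.getD 0 C5.one ≠ C5.one := by
  rcases hv with ⟨m', hm', rfl⟩ | ⟨k, hk1, hkn, c', hc', rfl⟩ | rfl | rfl | rfl | rfl
  · refine ⟨by simp; omega, ?_⟩
    rw [getD_zeros (by omega)]; exact fun h => C5.noConfusion h
  · obtain ⟨p0, _, _, _, _⟩ := pat_getD hc'
    rw [pat_length hc', p0]
    exact ⟨by omega, fun h => C5.noConfusion h⟩
  · exact ⟨by simp, by decide⟩
  · exact ⟨by simp, by decide⟩
  · exact ⟨by simp, by decide⟩
  · exact ⟨by simp, by decide⟩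

lemma forb_last {n : ℕ} {v : List C5} (hv : v ∈ Forb n) :
    v.getD (v.length - 1) C5.one ≠ C5.alpha := by
  rcases hv with ⟨m', hm', rfl⟩ | ⟨k, hk1, hkn, c', hc', rfl⟩ | rfl | rfl | rfl | rfl
  · rw [List.length_replicate, getD_zeros (by omega)]
    exact fun h => C5.noConfusion h
  · obtain ⟨_, _, _, _, p4⟩ := pat_getD hc'
    rw [pat_length hc', show 2*k+4-1 = 2*k+3 by omega, p4]
    exact fun h => C5.noConfusion h
  · decide
  · decide
  · decide
  · decide

lemma noforb_mono {n : ℕ} {u u' : List C5} (h : NoForb n u) (hinf : u' <:+: u) :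
    NoForb n u' := fun v hv hi => h v hv (hi.trans hinf)

lemma noforb_concat_alpha {n : ℕ} {u : List C5} (h : NoForb n u) :
    NoForb n (u ++ [C5.alpha]) := by
  intro v hv hinf
  obtain ⟨s, hsle, hwin⟩ := win_of_infix hinf
  obtain ⟨hpos, _⟩ := forb_head hv
  have hlast := forb_last hv
  rw [List.length_append, List.length_cons, List.length_nil] at hsle
  rcases Nat.lt_or_ge (s + v.length) (u.length + 1) with hlt | hge
  · refine h v hv (infix_of_win (u := u) (s := s) (by omega) (fun j hj => ?_))
    rw [← hwin j hj, List.getD_append _ _ _ _ (by omega)]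
  · have := hwin (v.length - 1) (by omega)
    rw [show s + (v.length - 1) = u.length by omega,
      List.getD_append_right _ _ _ _ (le_refl _), Nat.sub_self] at this
    exact hlast this.symm

lemma noforb_wa {n : ℕ} {a : List C5} (hn : NoForb n (a ++ [C5.alpha])) :
    NoForb n (List.replicate (a.length + 2) C5.one ++ (a ++ [C5.alpha])) := by
  intro v hv hinf
  obtain ⟨s, hsle, hwin⟩ := win_of_infix hinf
  obtain ⟨hpos, hhead⟩ := forb_head hv
  have hs : a.length + 2 ≤ s := by
    by_contra h'
    push_neg at h'
    have := hwin 0 hpos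
    rw [Nat.add_zero, List.getD_append _ _ _ _ (by simp; omega), getD_ones] at this
    exact hhead this.symm
  refine hn v hv (infix_of_win (u := a ++ [C5.alpha]) (s := s - (a.length + 2))
    (by simp at hsle ⊢; omega) (fun j hj => ?_))
  have := hwin j hj
  rwa [List.getD_append_right _ _ _ _ (by simp; omega),
    show s + j - (List.replicate (a.length + 2) C5.one).length
      = s - (a.length + 2) + j by simp; omega] at this

theorem stmt11 :
    ∀ (σ : C5) (a : List C5), LangOf Xcoded (a ++ [σ]) →
      ∃ w : List C5, LangOf Xcoded (w ++ a) ∧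
        ∀ c : List C5, LangOf Xcoded (c ++ w ++ a) →
          LangOf Xcoded (c ++ w ++ a ++ [σ]) := by
  intro σ a h
  obtain ⟨n, hn⟩ := lang_noforb h
  refine ⟨List.replicate (a.length + 2) C5.one, ?_, ?_⟩
  · apply lang_of_noforb _ n
    have hna : NoForb n a := noforb_mono hn ((List.prefix_append a [σ]).isInfix)
    have := noforb_wa (noforb_concat_alpha hna)
    rwa [← List.append_assoc] at this
  · intro c hc
    obtain ⟨m, hm⟩ := lang_noforb hc
    apply lang_of_noforb _ (max m n)
    have := noforb_parts a c σ (max m n) m n (le_max_left _ _) (le_max_right _ _)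
      (noforb_concat_alpha hn) hm
    simp only [List.append_assoc] at this ⊢
    exact this
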